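/- (Khintchine inequality for Type II superorthogonal systems) Let $r \geq 1$ be an integer, $X$ a measure space, $H$ a finite-dimensional complex Hilbert space, and $S$ a finite set. Suppose $(f_s)_{s \in S}$ with $f_s \in L^{2r}(X;H)$ satisfies: $\int_X \prod_{j=1}^r \langle f_{s_j}, f_{s_{r+j}}\rangle_H \, d\mu = 0$ whenever one of $s_1, \dots, s_{2r} \in S$ appears exactly once in the tuple. Then $\|\sum_{s \in S} f_s\|_{L^{2r}(X;H)} \leq (Cr)^{1/2} \| (\sum_{s \in S} \|f_s\|_H^2)^{1/2} \|_{L^{2r}(X)}$ for some absolute constant $C$. -/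

import Mathlib

open MeasureTheory Finset
open scoped ENNReal

namespace KhinSuper

/-! ### Scalar inequalities -/

lemma pow_le_factorial_mul_exp {t : ℝ} (ht : 0 ≤ t) (n : ℕ) :
    t ^ n ≤ (Nat.factorial n : ℝ) * Real.exp t := by
  have hfac : (0:ℝ) < (Nat.factorial n : ℝ) := by exact_mod_cast n.factorial_pos
  have h := Real.pow_div_factorial_le_exp t ht n
  rw [div_le_iff₀ hfac] at h
  linarith [h]

lemma pow_two_mul_le (r : ℕ) (y : ℝ) :
    y ^ (2*r) ≤ (Nat.factorial (2*r) : ℝ) * (Real.exp y + Real.exp (-y)) := by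
  have h1 : y ^ (2*r) = |y| ^ (2*r) := ((even_two_mul r).pow_abs y).symm
  have h2 : |y| ^ (2*r) ≤ (Nat.factorial (2*r) : ℝ) * Real.exp |y| :=
    pow_le_factorial_mul_exp (abs_nonneg y) _
  have h3 : Real.exp |y| ≤ Real.exp y + Real.exp (-y) := by
    rcases abs_choice y with h | h <;> rw [h] <;>
      nlinarith [Real.exp_pos y, Real.exp_pos (-y)]
  have hfac : (0:ℝ) ≤ (Nat.factorial (2*r) : ℝ) := by positivity
  calc y ^ (2*r) = |y| ^ (2*r) := h1
    _ ≤ (Nat.factorial (2*r) : ℝ) * Real.exp |y| := h2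
    _ ≤ (Nat.factorial (2*r) : ℝ) * (Real.exp y + Real.exp (-y)) := by
        exact mul_le_mul_of_nonneg_left h3 hfac

lemma exp_le_one_add_add_sq {x : ℝ} (h0 : 0 ≤ x) (h1 : x ≤ 1) :
    Real.exp x ≤ 1 + x + x ^ 2 := by
  have h := Real.exp_bound' h0 h1 (n := 2) (by norm_num)
  simp only [Finset.sum_range_succ, Finset.sum_range_zero, pow_zero, pow_one,
    Nat.factorial] at h
  norm_num at h
  nlinarith [sq_nonneg x]

lemma exp_sub_le_exp_sq {x : ℝ} (hx : 0 ≤ x) : Real.exp x - x ≤ Real.exp (x ^ 2) := by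
  rcases le_or_gt x 1 with h | h
  · have h2 := exp_le_one_add_add_sq hx h
    have h3 : (1:ℝ) + x^2 ≤ Real.exp (x^2) := by linarith [Real.add_one_le_exp (x^2)]
    linarith
  · have h2 : Real.exp x ≤ Real.exp (x^2) := Real.exp_le_exp.2 (by nlinarith)
    linarith

lemma mgf_bound (u : ℝ) :
    (1/5) * Real.exp (4*u) + (4/5) * Real.exp (-u) ≤ Real.exp (16 * u^2) := by
  have key : ∀ v : ℝ, 0 ≤ v →
      (1/5) * Real.exp (4*v) + (4/5) * Real.exp (-v) ≤ Real.exp (16 * v^2) := by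
    intro v hv
    have e4 : 1 + 4*v + (4*v)^2/2 ≤ Real.exp (4*v) :=
      Real.quadratic_le_exp_of_nonneg (by linarith)
    have hev : Real.exp (-v) * (1 + v) ≤ 1 := by
      have h := Real.add_one_le_exp v
      have hp := (Real.exp_pos (-v)).le
      have hmul : Real.exp (-v) * (v + 1) ≤ Real.exp (-v) * Real.exp v :=
        mul_le_mul_of_nonneg_left h hp
      rw [← Real.exp_add, neg_add_cancel, Real.exp_zero] at hmul
      linarith [hmul]
    have hneg : Real.exp (-v) ≤ 1 - v + v^2 := by nlinarith [Real.exp_pos (-v), hv]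
    have hc1 : (1/5) * Real.exp (4*v) + (4/5) * Real.exp (-v) ≤ Real.exp (4*v) - 4*v := by
      nlinarith [hv, sq_nonneg v]
    have hc2 : Real.exp (4*v) - 4*v ≤ Real.exp ((4*v)^2) := exp_sub_le_exp_sq (by linarith)
    have : ((4:ℝ)*v)^2 = 16 * v^2 := by ring
    rw [this] at hc2
    linarith
  rcases le_or_gt 0 u with hu | hu
  · exact key u hu
  · set t := -u with htdef
    have ht : (0:ℝ) ≤ t := by rw [htdef]; linarith
    have hs : 4 * Real.sinh t ≤ Real.sinh (4 * t) := by
      have h1 : Real.sinh (4 * t) = 2 * Real.sinh (2 * t) * Real.cosh (2 * t) := by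
        rw [show (4:ℝ) * t = 2 * (2 * t) by ring, Real.sinh_two_mul]
      have h2 : Real.sinh (2 * t) = 2 * Real.sinh t * Real.cosh t := Real.sinh_two_mul _
      have hc1 : (1:ℝ) ≤ Real.cosh (2 * t) := Real.one_le_cosh _
      have hc2 : (1:ℝ) ≤ Real.cosh t := Real.one_le_cosh _
      have hsn : 0 ≤ Real.sinh t := Real.sinh_nonneg_iff.2 ht
      have hsn2 : 0 ≤ Real.sinh (2 * t) := Real.sinh_nonneg_iff.2 (by linarith)
      nlinarith
    rw [Real.sinh_eq, Real.sinh_eq] at hs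
    have hkey := key t ht
    have hu4 : (4:ℝ)*u = -(4*t) := by rw [htdef]; ring
    have hu2 : (16:ℝ)*u^2 = 16*t^2 := by rw [htdef]; ring
    rw [hu4, hu2]
    linarith [hs, hkey]

/-! ### The combinatorial core -/

noncomputable def wt : Bool → ℝ := fun b => if b then 1/5 else 4/5
noncomputable def Xv : Bool → ℝ := fun b => if b then 4 else -1
noncomputable def mu (m : ℕ) : ℝ := (1/5) * 4 ^ m + (4/5) * (-1 : ℝ) ^ m

lemma wt_nonneg (b : Bool) : 0 ≤ wt b := by cases b <;> norm_num [wt]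

lemma one_le_mu {m : ℕ} (hm : m ≠ 1) : 1 ≤ mu m := by
  match m, hm with
  | 0, _ => norm_num [mu]
  | (n+2), _ =>
    have h4 : (16:ℝ) ≤ 4 ^ (n+2) := by
      calc (16:ℝ) = 4^2 := by norm_num
        _ ≤ 4^(n+2) := by
          apply pow_le_pow_right₀ (by norm_num) (by omega)
    have hm1 : (-1:ℝ) ≤ (-1:ℝ)^(n+2) := by
      rcases neg_one_pow_eq_or ℝ (n+2) with h | h <;> rw [h] <;> norm_num
    simp only [mu]
    nlinarith

lemma mu_nonneg (m : ℕ) : 0 ≤ mu m := by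
  rcases eq_or_ne m 1 with rfl | h
  · norm_num [mu]
  · linarith [one_le_mu h]

lemma moment (m : ℕ) : ∑ b : Bool, wt b * Xv b ^ m = mu m := by
  simp [wt, Xv, mu, Fintype.sum_bool]

variable {ι : Type} [Fintype ι] [DecidableEq ι]

lemma fact_aux (φ : ι → Bool → ℝ) :
    ∏ s : ι, (∑ b : Bool, wt b * φ s b) = ∑ ω : ι → Bool, ∏ s : ι, (wt (ω s) * φ s (ω s)) := by
  rw [Finset.prod_univ_sum, Fintype.piFinset_univ]


lemma comb_core (γ : Type) [Fintype γ] [DecidableEq γ] (r : ℕ) (hr : 1 ≤ r)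
    (hγ : Fintype.card γ = 2 * r) (a : ι → ℝ) (ha : ∀ s, 0 ≤ a s) :
    ∑ w ∈ Finset.univ.filter
        (fun w : γ → ι => ∀ b, (Finset.univ.filter fun i => w i = b).card ≠ 1),
      ∏ i, a (w i) ≤ (512 * r : ℝ) ^ r * (∑ s, a s ^ 2) ^ r := by
  have hA2nn : (0:ℝ) ≤ ∑ s, a s ^ 2 := Finset.sum_nonneg fun s _ => sq_nonneg _
  set A2 := ∑ s, a s ^ 2 with hA2def
  have hfib : ∀ (w : γ → ι) (ω : ι → Bool),
      (∏ i : γ, Xv (ω (w i)))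
        = ∏ s : ι, Xv (ω s) ^ (Finset.univ.filter fun i => w i = s).card := by
    intro w ω
    rw [← Finset.prod_fiberwise_of_maps_to (g := w) (t := Finset.univ)
        (fun i _ => Finset.mem_univ (w i)) (fun i => Xv (ω (w i)))]
    refine Finset.prod_congr rfl fun s _ => ?_
    have hcongr : ∀ i ∈ Finset.univ.filter fun i => w i = s, Xv (ω (w i)) = Xv (ω s) := by
      intro i hi; rw [(Finset.mem_filter.1 hi).2]
    rw [Finset.prod_congr rfl hcongr, Finset.prod_const]
  have hmom : ∀ w : γ → ι,
      (∑ ω : ι → Bool, (∏ s, wt (ω s)) * ∏ i : γ, Xv (ω (w i)))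
        = ∏ s : ι, mu ((Finset.univ.filter fun i => w i = s).card) := by
    intro w
    have h1 : ∀ ω : ι → Bool, (∏ s, wt (ω s)) * ∏ i : γ, Xv (ω (w i))
        = ∏ s : ι, (wt (ω s) * Xv (ω s) ^ (Finset.univ.filter fun i => w i = s).card) := by
      intro ω
      rw [hfib w ω, ← Finset.prod_mul_distrib]
    rw [Finset.sum_congr rfl fun ω _ => h1 ω,
      ← fact_aux (fun s b => Xv b ^ (Finset.univ.filter fun i => w i = s).card)]
    exact Finset.prod_congr rfl fun s _ => moment _
  have hexp : (∑ ω : ι → Bool, (∏ s, wt (ω s)) * (∑ s, Xv (ω s) * a s) ^ (2*r))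
      = ∑ w : γ → ι, (∏ i, a (w i)) *
          ∏ s : ι, mu ((Finset.univ.filter fun i => w i = s).card) := by
    have h1 : ∀ ω : ι → Bool, (∑ s, Xv (ω s) * a s) ^ (2*r)
        = ∑ w : γ → ι, ∏ i : γ, (Xv (ω (w i)) * a (w i)) := by
      intro ω
      have h0 : ∏ _i : γ, (∑ s, Xv (ω s) * a s) = (∑ s, Xv (ω s) * a s) ^ (2*r) := by
        rw [Finset.prod_const, Finset.card_univ, hγ]
      rw [← h0, Finset.prod_univ_sum (fun _ => Finset.univ) (fun _i s => Xv (ω s) * a s),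
        Fintype.piFinset_univ]
    calc (∑ ω : ι → Bool, (∏ s, wt (ω s)) * (∑ s, Xv (ω s) * a s) ^ (2*r))
        = ∑ ω : ι → Bool, ∑ w : γ → ι, (∏ i, a (w i)) *
            ((∏ s, wt (ω s)) * ∏ i : γ, Xv (ω (w i))) := by
          refine Finset.sum_congr rfl fun ω _ => ?_
          rw [h1 ω, Finset.mul_sum]
          refine Finset.sum_congr rfl fun w _ => ?_
          rw [Finset.prod_mul_distrib]
          ring
      _ = ∑ w : γ → ι, (∏ i, a (w i)) *
            ∑ ω : ι → Bool, (∏ s, wt (ω s)) * ∏ i : γ, Xv (ω (w i)) := by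
          rw [Finset.sum_comm]
          exact Finset.sum_congr rfl fun w _ => (Finset.mul_sum _ _ _).symm
      _ = _ := Finset.sum_congr rfl fun w _ => by rw [hmom w]
  have hT : (∑ w ∈ Finset.univ.filter
        (fun w : γ → ι => ∀ b, (Finset.univ.filter fun i => w i = b).card ≠ 1),
      ∏ i, a (w i))
      ≤ ∑ ω : ι → Bool, (∏ s, wt (ω s)) * (∑ s, Xv (ω s) * a s) ^ (2*r) := by
    rw [hexp]
    calc (∑ w ∈ Finset.univ.filter
          (fun w : γ → ι => ∀ b, (Finset.univ.filter fun i => w i = b).card ≠ 1),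
        ∏ i, a (w i))
        ≤ ∑ w ∈ Finset.univ.filter
            (fun w : γ → ι => ∀ b, (Finset.univ.filter fun i => w i = b).card ≠ 1),
          (∏ i, a (w i)) * ∏ s : ι, mu ((Finset.univ.filter fun i => w i = s).card) := by
          refine Finset.sum_le_sum fun w hw => ?_
          refine le_mul_of_one_le_right (Finset.prod_nonneg fun i _ => ha _) ?_
          have h1 := Finset.prod_le_prod (s := (Finset.univ : Finset ι)) (f := fun _ : ι => (1:ℝ))
            (g := fun s : ι => mu ((Finset.univ.filter fun i => w i = s).card))
            (fun _ _ => zero_le_one)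
            (fun s _ => one_le_mu ((Finset.mem_filter.1 hw).2 s))
          simpa using h1
      _ ≤ _ := by
          refine Finset.sum_le_sum_of_subset_of_nonneg (Finset.filter_subset _ _)
            (fun w _ _ => mul_nonneg (Finset.prod_nonneg fun i _ => ha _)
              (Finset.prod_nonneg fun s _ => mu_nonneg _))
  rcases eq_or_lt_of_le hA2nn with hA20 | hA2pos
  · have haz : ∀ s, a s = 0 := by
      intro s
      have h := (Finset.sum_eq_zero_iff_of_nonneg
        (fun i _ => sq_nonneg (a i))).1 hA20.symm s (Finset.mem_univ s)
      exact pow_eq_zero_iff two_ne_zero |>.1 h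
    have hγne : Nonempty γ := by
      rw [← Fintype.card_pos_iff, hγ]; omega
    obtain ⟨i0⟩ := hγne
    have hz : (∑ w ∈ Finset.univ.filter
        (fun w : γ → ι => ∀ b, (Finset.univ.filter fun i => w i = b).card ≠ 1),
        ∏ i, a (w i)) = 0 :=
      Finset.sum_eq_zero fun w _ => Finset.prod_eq_zero (Finset.mem_univ i0) (haz _)
    rw [hz]
    exact mul_nonneg (by positivity) (pow_nonneg hA2nn r)
  · have hr1 : (1:ℝ) ≤ (r:ℝ) := by exact_mod_cast hr
    have hrpos : (0:ℝ) < (r:ℝ) := by linarith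
    set lam := Real.sqrt ((r:ℝ) / (16 * A2)) with hlamdef
    have hlam2 : lam ^ 2 = (r:ℝ) / (16 * A2) := Real.sq_sqrt (by positivity)
    have hlampos : 0 < lam := Real.sqrt_pos.2 (by positivity)
    have hmgf : ∀ c : ℝ, c ^ 2 = lam ^ 2 →
        (∑ ω : ι → Bool, (∏ s, wt (ω s)) * Real.exp (c * ∑ s, Xv (ω s) * a s))
          ≤ Real.exp (r:ℝ) := by
      intro c hc
      have h1 : ∀ ω : ι → Bool, (∏ s, wt (ω s)) * Real.exp (c * ∑ s, Xv (ω s) * a s)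
          = ∏ s : ι, (wt (ω s) * Real.exp (c * (Xv (ω s) * a s))) := by
        intro ω
        rw [Finset.mul_sum, Real.exp_sum, ← Finset.prod_mul_distrib]
      rw [Finset.sum_congr rfl fun ω _ => h1 ω,
        ← fact_aux (fun s b => Real.exp (c * (Xv b * a s)))]
      calc ∏ s : ι, (∑ b : Bool, wt b * Real.exp (c * (Xv b * a s)))
          ≤ ∏ s : ι, Real.exp (16 * (c * a s)^2) := by
            refine Finset.prod_le_prod
              (fun s _ => Finset.sum_nonneg fun b _ =>
                mul_nonneg (wt_nonneg b) (Real.exp_pos _).le)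
              (fun s _ => ?_)
            have hb : (∑ b : Bool, wt b * Real.exp (c * (Xv b * a s)))
                = (1/5) * Real.exp (4 * (c * a s)) + (4/5) * Real.exp (-(c * a s)) := by
              have e1 : c * ((4:ℝ) * a s) = 4 * (c * a s) := by ring
              have e2 : c * ((-1:ℝ) * a s) = -(c * a s) := by ring
              rw [Fintype.sum_bool]
              have w1 : wt true = 1/5 := rfl
              have w2 : wt false = 4/5 := rfl
              have x1 : Xv true = 4 := rfl
              have x2 : Xv false = -1 := rfl
              rw [w1, w2, x1, x2, e1, e2]
            rw [hb]
            exact mgf_bound (c * a s)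
        _ = Real.exp (∑ s, 16 * (c * a s)^2) := (Real.exp_sum _ _).symm
        _ = Real.exp (r:ℝ) := by
            congr 1
            have hsum : ∑ s, 16 * (c * a s)^2 = 16 * c^2 * A2 := by
              rw [hA2def, Finset.mul_sum]
              exact Finset.sum_congr rfl fun s _ => by ring
            rw [hsum, hc, hlam2]
            field_simp
    have hpw : ∀ y : ℝ, lam^(2*r) * y^(2*r)
        ≤ (Nat.factorial (2*r) : ℝ) * (Real.exp (lam*y) + Real.exp (-(lam*y))) := by
      intro y
      have h := pow_two_mul_le r (lam*y)
      rwa [mul_pow] at h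
    have hEle : (∑ ω : ι → Bool, (∏ s, wt (ω s)) * (∑ s, Xv (ω s) * a s) ^ (2*r))
        ≤ 2 * (Nat.factorial (2*r) : ℝ) * Real.exp (r:ℝ) / lam ^ (2*r) := by
      rw [le_div_iff₀ (by positivity)]
      calc (∑ ω : ι → Bool, (∏ s, wt (ω s)) * (∑ s, Xv (ω s) * a s) ^ (2*r)) * lam ^ (2*r)
          = ∑ ω : ι → Bool, (∏ s, wt (ω s)) *
              (lam^(2*r) * (∑ s, Xv (ω s) * a s) ^ (2*r)) := by
            rw [Finset.sum_mul]
            exact Finset.sum_congr rfl fun ω _ => by ring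
        _ ≤ ∑ ω : ι → Bool, (∏ s, wt (ω s)) *
              ((Nat.factorial (2*r) : ℝ) *
                (Real.exp (lam * ∑ s, Xv (ω s) * a s)
                  + Real.exp (-(lam * ∑ s, Xv (ω s) * a s)))) := by
            refine Finset.sum_le_sum fun ω _ => ?_
            exact mul_le_mul_of_nonneg_left (hpw _)
              (Finset.prod_nonneg fun s _ => wt_nonneg _)
        _ = (Nat.factorial (2*r) : ℝ) *
              ((∑ ω : ι → Bool, (∏ s, wt (ω s)) * Real.exp (lam * ∑ s, Xv (ω s) * a s))
                + (∑ ω : ι → Bool, (∏ s, wt (ω s)) *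
                    Real.exp (-(lam * ∑ s, Xv (ω s) * a s)))) := by
            rw [← Finset.sum_add_distrib, Finset.mul_sum]
            exact Finset.sum_congr rfl fun ω _ => by ring
        _ ≤ (Nat.factorial (2*r) : ℝ) * (Real.exp (r:ℝ) + Real.exp (r:ℝ)) := by
            refine mul_le_mul_of_nonneg_left ?_ (by positivity)
            have hneg : (∑ ω : ι → Bool, (∏ s, wt (ω s)) *
                Real.exp (-(lam * ∑ s, Xv (ω s) * a s)))
                = ∑ ω : ι → Bool, (∏ s, wt (ω s)) *
                    Real.exp ((-lam) * ∑ s, Xv (ω s) * a s) := by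
              exact Finset.sum_congr rfl fun ω _ => by rw [neg_mul]
            rw [hneg]
            exact add_le_add (hmgf lam rfl) (hmgf (-lam) (by ring))
        _ = 2 * (Nat.factorial (2*r) : ℝ) * Real.exp (r:ℝ) := by ring
    have hfinal : 2 * (Nat.factorial (2*r) : ℝ) * Real.exp (r:ℝ) / lam ^ (2*r)
        ≤ (512 * r : ℝ) ^ r * A2 ^ r := by
      have hlam2r : lam ^ (2*r) = ((r:ℝ) / (16*A2))^r := by rw [pow_mul, hlam2]
      rw [hlam2r, div_le_iff₀ (by positivity)]
      have hrhs : (512*(r:ℝ))^r * A2^r * ((r:ℝ)/(16*A2))^r = (32*(r:ℝ)^2)^r := by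
        rw [← mul_pow, ← mul_pow]
        congr 1
        field_simp
        ring
      rw [hrhs]
      have hfact : ((Nat.factorial (2*r)) : ℝ) ≤ ((2*r:ℕ):ℝ)^(2*r) := by
        exact_mod_cast Nat.factorial_le_pow (2*r)
      have hexp1 : Real.exp ((r:ℕ):ℝ) ≤ 3^r := by
        rw [show ((r:ℕ):ℝ) = (r:ℕ) * (1:ℝ) by ring, Real.exp_nat_mul]
        exact pow_le_pow_left₀ (Real.exp_pos 1).le (by linarith [Real.exp_one_lt_d9]) r
      have h2r2 : ((2*r:ℕ):ℝ)^(2*r) = (4*(r:ℝ)^2)^r := by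
        push_cast
        rw [show (2*(r:ℝ))^(2*r) = ((2*(r:ℝ))^2)^r by rw [← pow_mul], show ((2*(r:ℝ))^2) = 4*(r:ℝ)^2 by ring]
      have h2le : (2:ℝ) ≤ 2^r := by
        calc (2:ℝ) = 2^1 := (pow_one 2).symm
          _ ≤ 2^r := pow_le_pow_right₀ one_le_two hr
      calc 2 * (Nat.factorial (2*r):ℝ) * Real.exp (r:ℝ)
          ≤ 2 * ((2*r:ℕ):ℝ)^(2*r) * 3^r := by
            have he := (Real.exp_pos ((r:ℕ):ℝ)).le
            have hf0 : (0:ℝ) ≤ (Nat.factorial (2*r):ℝ) := by positivity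
            nlinarith [mul_le_mul hfact hexp1 he (by positivity : (0:ℝ) ≤ ((2*r:ℕ):ℝ)^(2*r))]
        _ = 2 * (12*(r:ℝ)^2)^r := by
            rw [h2r2, mul_assoc, ← mul_pow]
            have h123 : (4*(r:ℝ)^2) * 3 = 12*(r:ℝ)^2 := by ring
            rw [h123]
        _ ≤ 2^r * (12*(r:ℝ)^2)^r := by
            exact mul_le_mul_of_nonneg_right h2le (by positivity)
        _ = (24*(r:ℝ)^2)^r := by
            rw [← mul_pow]
            congr 1
            ring
        _ ≤ (32*(r:ℝ)^2)^r := by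
            exact pow_le_pow_left₀ (by positivity) (by nlinarith) r
    exact hT.trans (hEle.trans hfinal)


lemma card_sum_filter (r : ℕ) (s t : Fin r → ι) (b : ι) :
    (Finset.univ.filter fun i : Fin r ⊕ Fin r => Sum.elim s t i = b).card
      = (Finset.univ.filter fun j => s j = b).card
        + (Finset.univ.filter fun j => t j = b).card := by
  rw [Finset.card_filter, Finset.card_filter, Finset.card_filter, Fintype.sum_sum_type]
  simp only [Sum.elim_inl, Sum.elim_inr]
  convert rfl <;> split_ifs <;> simp_all

lemma comb_pairs (r : ℕ) (hr : 1 ≤ r) (a : ι → ℝ) (ha : ∀ s, 0 ≤ a s) :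
    ∑ st ∈ Finset.univ.filter
        (fun st : (Fin r → ι) × (Fin r → ι) =>
          ¬ ∃ b, (Finset.univ.filter fun j => st.1 j = b).card
              + (Finset.univ.filter fun j => st.2 j = b).card = 1),
      (∏ j, a (st.1 j) * a (st.2 j))
      ≤ (512 * r : ℝ) ^ r * (∑ s, a s ^ 2) ^ r := by
  have hcard : Fintype.card (Fin r ⊕ Fin r) = 2 * r := by
    simp [Fintype.card_sum]
    ring
  refine le_trans (le_of_eq ?_) (comb_core (Fin r ⊕ Fin r) r hr hcard a ha)
  refine Finset.sum_nbij' (i := fun st : (Fin r → ι) × (Fin r → ι) => Sum.elim st.1 st.2)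
    (j := fun w : Fin r ⊕ Fin r → ι => (w ∘ Sum.inl, w ∘ Sum.inr)) ?_ ?_ ?_ ?_ ?_
  · intro st hst
    rw [Finset.mem_filter] at hst ⊢
    refine ⟨Finset.mem_univ _, ?_⟩
    intro b
    rw [card_sum_filter]
    push_neg at hst
    exact hst.2 b
  · intro w hw
    rw [Finset.mem_filter] at hw ⊢
    refine ⟨Finset.mem_univ _, ?_⟩
    push_neg
    intro b
    have h := hw.2 b
    rw [← card_sum_filter]
    have helim : Sum.elim (w ∘ Sum.inl) (w ∘ Sum.inr) = w := Sum.elim_comp_inl_inr w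
    rw [helim]
    exact h
  · intro st _
    rfl
  · intro w _
    exact Sum.elim_comp_inl_inr w
  · intro st _
    rw [Finset.prod_mul_distrib, Fintype.prod_sum_type]
    rfl

end KhinSuper

open KhinSuper in
theorem khintchine_superorthogonal :
    ∃ C : ℝ, 0 < C ∧
    ∀ (r : ℕ), 1 ≤ r →
    ∀ (X : Type) (_ : MeasurableSpace X) (μ : Measure X)
      (H : Type) (_ : NormedAddCommGroup H) (_ : @InnerProductSpace ℂ H _ _)
      (_ : FiniteDimensional ℂ H)
      (ι : Type) (_ : Fintype ι) (_ : DecidableEq ι)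
      (f : ι → X → H),
      (∀ s, MemLp (f s) (2 * r) μ) →
      (∀ s t : Fin r → ι,
        (∃ a : ι, (Finset.univ.filter fun j => s j = a).card
            + (Finset.univ.filter fun j => t j = a).card = 1) →
        ∫ x, ∏ j, (inner ℂ (f (s j) x) (f (t j) x) : ℂ) ∂μ = 0) →
      (∫ x, ‖∑ s, f s x‖ ^ (2 * r) ∂μ) ^ (1 / (2 * r : ℝ)) ≤
        Real.sqrt (C * r) *
          (∫ x, (∑ s, ‖f s x‖ ^ 2) ^ r ∂μ) ^ (1 / (2 * r : ℝ)) := by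
  classical
  refine ⟨512, by norm_num, ?_⟩
  intro r hr X mX μ H hH1 hH2 hH3 ι hι1 hι2 f hMem hOrth
  have hrR : (1:ℝ) ≤ (r:ℝ) := by exact_mod_cast hr
  have hrpos : (0:ℝ) < (r:ℝ) := by linarith
  have haesm : ∀ s, AEStronglyMeasurable (f s) μ := fun s => (hMem s).aestronglyMeasurable
  -- integrability of ‖f s‖^(2r)
  have hInt2r : ∀ s, Integrable (fun x => ‖f s x‖ ^ (2*r)) μ := by
    intro s
    have hp0 : (2 * (r:ℝ≥0∞)) ≠ 0 := by
      simp only [ne_eq, mul_eq_zero, not_or]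
      constructor
      · simp
      · simp only [Nat.cast_eq_zero]
        omega
    have hpt : (2 * (r:ℝ≥0∞)) ≠ ⊤ := ENNReal.mul_ne_top (by simp) (ENNReal.natCast_ne_top r)
    have h := (hMem s).integrable_norm_rpow hp0 hpt
    refine h.congr (Filter.Eventually.of_forall fun x => ?_)
    rw [ENNReal.toReal_mul, ENNReal.toReal_natCast]
    rw [show ((2:ℝ≥0∞)).toReal = (2:ℝ) by simp]
    rw [show (2:ℝ) * (r:ℝ) = ((2*r : ℕ) : ℝ) by push_cast; ring]
    exact Real.rpow_natCast _ _
  -- the dominating function S^(2r)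
  have haesmS : AEStronglyMeasurable (fun x => ∑ s, ‖f s x‖) μ :=
    Finset.aestronglyMeasurable_fun_sum _ (fun s _ => (haesm s).norm)
  have haesmS2r : AEStronglyMeasurable (fun x => (∑ s, ‖f s x‖) ^ (2*r)) μ :=
    (continuous_pow (2*r)).comp_aestronglyMeasurable haesmS
  have hIntS2r : Integrable (fun x => (∑ s, ‖f s x‖) ^ (2*r)) μ := by
    rcases isEmpty_or_nonempty ι with hE | hNE
    · have hz : (fun x => (∑ s, ‖f s x‖) ^ (2*r)) = fun _ => (0:ℝ) := by
        funext x
        rw [Finset.univ_eq_empty, Finset.sum_empty]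
        exact zero_pow (by omega)
      rw [hz]
      exact integrable_zero _ _ _
    · have hbound : Integrable
          (fun x => (Fintype.card ι : ℝ) ^ (2*r-1) * ∑ s, ‖f s x‖^(2*r)) μ :=
        (integrable_finset_sum _ (fun s _ => hInt2r s)).const_mul _
      refine hbound.mono' haesmS2r (Filter.Eventually.of_forall fun x => ?_)
      have hSnn : (0:ℝ) ≤ ∑ s, ‖f s x‖ := Finset.sum_nonneg fun s _ => norm_nonneg _
      rw [Real.norm_eq_abs, abs_of_nonneg (pow_nonneg hSnn _)]
      have hcard : (0:ℝ) < (Fintype.card ι : ℝ) := by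
        exact_mod_cast Fintype.card_pos
      have h := pow_sum_div_card_le_sum_pow (s := Finset.univ)
        (f := fun s => ‖f s x‖) (fun i _ => norm_nonneg _) (2*r-1)
      rw [Finset.card_univ] at h
      rw [div_le_iff₀ (by positivity)] at h
      have h2 : 2*r - 1 + 1 = 2*r := by omega
      rw [h2] at h
      calc (∑ s, ‖f s x‖) ^ (2*r)
          ≤ (∑ i, ‖f i x‖ ^ (2*r)) * (Fintype.card ι:ℝ) ^ (2*r-1) := h
        _ = (Fintype.card ι : ℝ) ^ (2*r-1) * ∑ s, ‖f s x‖^(2*r) := by ring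
  -- pointwise bounds
  have hprodle : ∀ (st : (Fin r → ι) × (Fin r → ι)) (x : X),
      (∏ j, ‖f (st.1 j) x‖ * ‖f (st.2 j) x‖) ≤ (∑ s, ‖f s x‖) ^ (2*r) := by
    intro st x
    have hSnn : (0:ℝ) ≤ ∑ s, ‖f s x‖ := Finset.sum_nonneg fun s _ => norm_nonneg _
    have hle : ∀ s : ι, ‖f s x‖ ≤ ∑ u, ‖f u x‖ := fun s =>
      Finset.single_le_sum (fun u _ => norm_nonneg (f u x)) (Finset.mem_univ s)
    calc (∏ j, ‖f (st.1 j) x‖ * ‖f (st.2 j) x‖)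
        ≤ ∏ _j : Fin r, ((∑ s, ‖f s x‖) * (∑ s, ‖f s x‖)) := by
          refine Finset.prod_le_prod (fun j _ => mul_nonneg (norm_nonneg _) (norm_nonneg _))
            (fun j _ => mul_le_mul (hle _) (hle _) (norm_nonneg _) hSnn)
      _ = (∑ s, ‖f s x‖) ^ (2*r) := by
          rw [Finset.prod_const, Finset.card_univ, Fintype.card_fin, ← sq, ← pow_mul]
  have hgq : ∀ (st : (Fin r → ι) × (Fin r → ι)) (x : X),
      ‖∏ j, (inner ℂ (f (st.1 j) x) (f (st.2 j) x) : ℂ)‖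
        ≤ ∏ j, ‖f (st.1 j) x‖ * ‖f (st.2 j) x‖ := by
    intro st x
    calc ‖∏ j, (inner ℂ (f (st.1 j) x) (f (st.2 j) x) : ℂ)‖
        ≤ ∏ j, ‖(inner ℂ (f (st.1 j) x) (f (st.2 j) x) : ℂ)‖ := norm_prod_le _ _
      _ ≤ ∏ j, ‖f (st.1 j) x‖ * ‖f (st.2 j) x‖ := by
          refine Finset.prod_le_prod (fun j _ => norm_nonneg _)
            (fun j _ => norm_inner_le_norm _ _)
  -- integrability of the complex products and real products
  have haesmg : ∀ st : (Fin r → ι) × (Fin r → ι),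
      AEStronglyMeasurable (fun x => ∏ j, (inner ℂ (f (st.1 j) x) (f (st.2 j) x) : ℂ)) μ :=
    fun st => Finset.aestronglyMeasurable_fun_prod _
      (fun j _ => AEStronglyMeasurable.inner (haesm _) (haesm _))
  have hIntg : ∀ st : (Fin r → ι) × (Fin r → ι),
      Integrable (fun x => ∏ j, (inner ℂ (f (st.1 j) x) (f (st.2 j) x) : ℂ)) μ := by
    intro st
    refine hIntS2r.mono' (haesmg st) (Filter.Eventually.of_forall fun x => ?_)
    exact (hgq st x).trans (hprodle st x)
  have haesmq : ∀ st : (Fin r → ι) × (Fin r → ι),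
      AEStronglyMeasurable (fun x => ∏ j, ‖f (st.1 j) x‖ * ‖f (st.2 j) x‖) μ :=
    fun st => Finset.aestronglyMeasurable_fun_prod _
      (fun j _ => ((haesm _).norm.mul (haesm _).norm))
  have hIntq : ∀ st : (Fin r → ι) × (Fin r → ι),
      Integrable (fun x => ∏ j, ‖f (st.1 j) x‖ * ‖f (st.2 j) x‖) μ := by
    intro st
    refine hIntS2r.mono' (haesmq st) (Filter.Eventually.of_forall fun x => ?_)
    have hnn : (0:ℝ) ≤ ∏ j, ‖f (st.1 j) x‖ * ‖f (st.2 j) x‖ :=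
      Finset.prod_nonneg fun j _ => mul_nonneg (norm_nonneg _) (norm_nonneg _)
    rw [Real.norm_eq_abs, abs_of_nonneg hnn]
    exact hprodle st x
  -- integrability of G
  have haesmG : AEStronglyMeasurable (fun x => (∑ s, ‖f s x‖^2) ^ r) μ := by
    refine (continuous_pow r).comp_aestronglyMeasurable ?_
    exact Finset.aestronglyMeasurable_fun_sum _
      (fun s _ => (continuous_pow 2).comp_aestronglyMeasurable (haesm s).norm)
  have hIntG : Integrable (fun x => (∑ s, ‖f s x‖^2) ^ r) μ := by
    refine hIntS2r.mono' haesmG (Filter.Eventually.of_forall fun x => ?_)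
    have h1 : (0:ℝ) ≤ ∑ s, ‖f s x‖^2 := Finset.sum_nonneg fun s _ => sq_nonneg _
    rw [Real.norm_eq_abs, abs_of_nonneg (pow_nonneg h1 _)]
    calc (∑ s, ‖f s x‖^2) ^ r
        ≤ ((∑ s, ‖f s x‖)^2) ^ r := by
          refine pow_le_pow_left₀ h1 ?_ r
          exact Finset.sum_sq_le_sq_sum_of_nonneg (fun s _ => norm_nonneg _)
      _ = (∑ s, ‖f s x‖) ^ (2*r) := by rw [← pow_mul]
  -- pointwise expansion of the inner product power
  have hinner_exp : ∀ x : X,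
      ((‖∑ s, f s x‖ ^ (2*r) : ℝ) : ℂ)
        = ∑ st : (Fin r → ι) × (Fin r → ι),
            ∏ j, (inner ℂ (f (st.1 j) x) (f (st.2 j) x) : ℂ) := by
    intro x
    have h1 : (inner ℂ (∑ s, f s x) (∑ s, f s x) : ℂ)
        = ∑ p : ι × ι, (inner ℂ (f p.1 x) (f p.2 x) : ℂ) := by
      rw [← Finset.univ_product_univ, Finset.sum_product]
      rw [sum_inner]
      exact Finset.sum_congr rfl fun s _ => inner_sum _ _ _
    have h0 : ∏ _j : Fin r, (∑ p : ι × ι, (inner ℂ (f p.1 x) (f p.2 x) : ℂ))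
        = (∑ p : ι × ι, (inner ℂ (f p.1 x) (f p.2 x) : ℂ)) ^ r := by
      rw [Finset.prod_const, Finset.card_univ, Fintype.card_fin]
    have h2 : (inner ℂ (∑ s, f s x) (∑ s, f s x) : ℂ) ^ r
        = ∑ st : (Fin r → ι) × (Fin r → ι),
            ∏ j, (inner ℂ (f (st.1 j) x) (f (st.2 j) x) : ℂ) := by
      rw [h1, ← h0, Finset.prod_univ_sum (fun _ : Fin r => (Finset.univ : Finset (ι × ι)))
        (fun _j (p : ι × ι) => (inner ℂ (f p.1 x) (f p.2 x) : ℂ)), Fintype.piFinset_univ]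
      exact Fintype.sum_equiv (Equiv.arrowProdEquivProdArrow (Fin r) (fun _ => ι) (fun _ => ι)) _ _ (fun P => rfl)
    have h3 : (inner ℂ (∑ s, f s x) (∑ s, f s x) : ℂ)
        = ((‖∑ s, f s x‖ : ℝ) : ℂ) ^ 2 := inner_self_eq_norm_sq_to_K _
    rw [← h2, h3, ← pow_mul, ← Complex.ofReal_pow]
  -- the integral identity
  set N := Finset.univ.filter
      (fun st : (Fin r → ι) × (Fin r → ι) =>
        ¬ ∃ b, (Finset.univ.filter fun j => st.1 j = b).card
            + (Finset.univ.filter fun j => st.2 j = b).card = 1) with hNdef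
  have hIntegral : ((∫ x, ‖∑ s, f s x‖ ^ (2*r) ∂μ : ℝ) : ℂ)
      = ∑ st ∈ N, ∫ x, ∏ j, (inner ℂ (f (st.1 j) x) (f (st.2 j) x) : ℂ) ∂μ := by
    have hcoe : ((∫ x, ‖∑ s, f s x‖ ^ (2*r) ∂μ : ℝ) : ℂ)
        = ∫ x, ((‖∑ s, f s x‖ ^ (2*r) : ℝ) : ℂ) ∂μ := (integral_ofReal (𝕜 := ℂ)).symm
    rw [hcoe]
    rw [integral_congr_ae (Filter.Eventually.of_forall hinner_exp)]
    rw [integral_finset_sum _ (fun st _ => hIntg st)]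
    rw [← Finset.sum_filter_add_sum_filter_not Finset.univ
      (fun st : (Fin r → ι) × (Fin r → ι) =>
        ∃ b, (Finset.univ.filter fun j => st.1 j = b).card
            + (Finset.univ.filter fun j => st.2 j = b).card = 1)
      (fun st => ∫ x, ∏ j, (inner ℂ (f (st.1 j) x) (f (st.2 j) x) : ℂ) ∂μ)]
    have hzero : (∑ st ∈ Finset.univ.filter
        (fun st : (Fin r → ι) × (Fin r → ι) =>
          ∃ b, (Finset.univ.filter fun j => st.1 j = b).card
              + (Finset.univ.filter fun j => st.2 j = b).card = 1),
        ∫ x, ∏ j, (inner ℂ (f (st.1 j) x) (f (st.2 j) x) : ℂ) ∂μ) = 0 :=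
      Finset.sum_eq_zero fun st hst => hOrth st.1 st.2 (Finset.mem_filter.1 hst).2
    rw [hzero, zero_add, hNdef]
  -- main estimate
  have hmain : (∫ x, ‖∑ s, f s x‖ ^ (2*r) ∂μ)
      ≤ (512 * (r:ℝ)) ^ r * ∫ x, (∑ s, ‖f s x‖^2) ^ r ∂μ := by
    have h1 : (∫ x, ‖∑ s, f s x‖ ^ (2*r) ∂μ)
        = (∑ st ∈ N, ∫ x, ∏ j, (inner ℂ (f (st.1 j) x) (f (st.2 j) x) : ℂ) ∂μ).re := by
      rw [← hIntegral, Complex.ofReal_re]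
    rw [h1]
    calc (∑ st ∈ N, ∫ x, ∏ j, (inner ℂ (f (st.1 j) x) (f (st.2 j) x) : ℂ) ∂μ).re
        ≤ ‖∑ st ∈ N, ∫ x, ∏ j, (inner ℂ (f (st.1 j) x) (f (st.2 j) x) : ℂ) ∂μ‖ := by
          exact Complex.re_le_norm _
      _ ≤ ∑ st ∈ N, ‖∫ x, ∏ j, (inner ℂ (f (st.1 j) x) (f (st.2 j) x) : ℂ) ∂μ‖ :=
          norm_sum_le _ _
      _ ≤ ∑ st ∈ N, ∫ x, ∏ j, ‖f (st.1 j) x‖ * ‖f (st.2 j) x‖ ∂μ := by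
          refine Finset.sum_le_sum fun st _ => ?_
          refine (norm_integral_le_integral_norm _).trans ?_
          exact integral_mono (hIntg st).norm (hIntq st) (fun x => hgq st x)
      _ = ∫ x, ∑ st ∈ N, ∏ j, ‖f (st.1 j) x‖ * ‖f (st.2 j) x‖ ∂μ :=
          (integral_finset_sum _ (fun st _ => hIntq st)).symm
      _ ≤ ∫ x, (512 * (r:ℝ)) ^ r * (∑ s, ‖f s x‖^2) ^ r ∂μ := by
          refine integral_mono (integrable_finset_sum _ (fun st _ => hIntq st))
            (hIntG.const_mul _) (fun x => ?_)
          exact comb_pairs r hr (fun s => ‖f s x‖) (fun s => norm_nonneg _)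
      _ = (512 * (r:ℝ)) ^ r * ∫ x, (∑ s, ‖f s x‖^2) ^ r ∂μ :=
          integral_const_mul _ _
  -- conclude
  have hLnn : (0:ℝ) ≤ ∫ x, ‖∑ s, f s x‖ ^ (2*r) ∂μ :=
    integral_nonneg fun x => pow_nonneg (norm_nonneg _) _
  have hGnn : (0:ℝ) ≤ ∫ x, (∑ s, ‖f s x‖^2) ^ r ∂μ :=
    integral_nonneg fun x => pow_nonneg (Finset.sum_nonneg fun s _ => sq_nonneg _) _
  have hKnn : (0:ℝ) ≤ (512 * (r:ℝ)) ^ r := by positivity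
  calc (∫ x, ‖∑ s, f s x‖ ^ (2*r) ∂μ) ^ (1 / (2 * (r:ℝ)))
      ≤ ((512 * (r:ℝ)) ^ r * ∫ x, (∑ s, ‖f s x‖^2) ^ r ∂μ) ^ (1 / (2 * (r:ℝ))) := by
        exact Real.rpow_le_rpow hLnn hmain (by positivity)
    _ = ((512 * (r:ℝ)) ^ r) ^ (1 / (2 * (r:ℝ)))
          * (∫ x, (∑ s, ‖f s x‖^2) ^ r ∂μ) ^ (1 / (2 * (r:ℝ))) :=
        Real.mul_rpow hKnn hGnn
    _ = Real.sqrt (512 * (r:ℝ))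
          * (∫ x, (∑ s, ‖f s x‖^2) ^ r ∂μ) ^ (1 / (2 * (r:ℝ))) := by
        congr 1
        rw [← Real.rpow_natCast (512 * (r:ℝ)) r, ← Real.rpow_mul (by positivity)]
        rw [show (r:ℝ) * (1 / (2 * (r:ℝ))) = 1/2 by field_simp]
        rw [Real.sqrt_eq_rpow]
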